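/- Let p be a prime and A a ℤ/pℤ-graded commutative ring with components A_i. Let J ⊆ A be the ideal J = I ⊕ A_1 ⊕ ⋯ ⊕ A_{p−1}, where I = Σ_{i=1}^{p−1} A_i·A_{p−i} ⊆ A_0. Then for every integer k ≥ 1, the degree-0 component of J^k satisfies J^k ∩ A_0 = Σ_{i=1}^{p−1} A_i·(J^{k−1} ∩ A_{p−i}), with the convention J^0 = A. -/

import Mathlib

/-- The `k`-th power of an additive subgroup (`ℤ`-submodule) `J` of a commutative ring `A`,
with the convention that `J^0 = A` (the whole ring). -/
def subgroupPow {A : Type*} [CommRing A] (J : Submodule ℤ A) : ℕ → Submodule ℤ A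
  | 0 => ⊤
  | n + 1 => J * subgroupPow J n

private lemma mem_finset_sum_submodule' {A : Type*} [CommRing A] {ι : Type*}
    (t : Finset ι) (C : ι → Submodule ℤ A) {x : A} (hx : x ∈ ∑ j ∈ t, C j) :
    ∃ g : ι → A, (∀ j ∈ t, g j ∈ C j) ∧ x = ∑ j ∈ t, g j := by
  classical
  induction t using Finset.induction_on generalizing x with
  | empty => exact ⟨0, by simp, by simpa using hx⟩
  | @insert a t ha ih =>
      rw [Finset.sum_insert ha, Submodule.add_eq_sup, Submodule.mem_sup] at hx
      obtain ⟨y, hy, z, hz, rfl⟩ := hx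
      obtain ⟨g, hg, rfl⟩ := ih hz
      refine ⟨Function.update g a y, ?_, ?_⟩
      · intro j hj
        rcases Finset.mem_insert.mp hj with rfl | hj'
        · simpa using hy
        · rw [Function.update_of_ne (ne_of_mem_of_not_mem hj' ha)]; exact hg j hj'
      · rw [Finset.sum_insert ha, Function.update_self]
        congr 1
        exact Finset.sum_congr rfl fun j hj =>
          (Function.update_of_ne (ne_of_mem_of_not_mem hj ha) _ _).symm

private lemma sum_le_submodule' {A : Type*} [CommRing A] {ι : Type*}
    (t : Finset ι) (C : ι → Submodule ℤ A) (P : Submodule ℤ A)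
    (h : ∀ j ∈ t, C j ≤ P) : ∑ j ∈ t, C j ≤ P := by
  intro x hx
  obtain ⟨g, hg, rfl⟩ := mem_finset_sum_submodule' t C hx
  exact Submodule.sum_mem _ fun j hj => h j hj (hg j hj)

private lemma inf_graded_component_le {A : Type*} [CommRing A] {p : ℕ}
    (𝒜 : ZMod p → Submodule ℤ A) [GradedRing 𝒜]
    {ι : Type*} [DecidableEq ι] (t : Finset ι) (f : ι → ZMod p) (C : ι → Submodule ℤ A)
    (hC : ∀ j ∈ t, C j ≤ 𝒜 (f j)) (m : ZMod p) :
    (∑ j ∈ t, C j) ⊓ 𝒜 m ≤ ∑ j ∈ t.filter (fun j => f j = m), C j := by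
  classical
  rintro x ⟨hx1, hx2⟩
  obtain ⟨g, hg, rfl⟩ := mem_finset_sum_submodule' t C hx1
  have h1 : ((DirectSum.decompose 𝒜 (∑ j ∈ t, g j)) m : A) = ∑ j ∈ t, g j := by
    rw [DirectSum.decompose_of_mem 𝒜 hx2, DirectSum.of_eq_same]
  have h2 : ((DirectSum.decompose 𝒜 (∑ j ∈ t, g j)) m : A)
      = ∑ j ∈ t, if f j = m then g j else 0 := by
    rw [DirectSum.decompose_sum, DFinsupp.finset_sum_apply,
      AddSubmonoidClass.coe_finset_sum]
    refine Finset.sum_congr rfl fun j hj => ?_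
    rw [DirectSum.decompose_of_mem 𝒜 (hC j hj (hg j hj))]
    by_cases h : f j = m
    · subst h; rw [DirectSum.of_eq_same, if_pos rfl]
    · rw [DirectSum.of_eq_of_ne _ _ _ (Ne.symm h), if_neg h, ZeroMemClass.coe_zero]
  have key : (∑ j ∈ t, g j) = ∑ j ∈ t.filter (fun j => f j = m), g j := by
    rw [Finset.sum_filter, ← h2, h1]
  rw [key]
  exact Submodule.sum_mem _ fun j hj =>
    Finset.single_le_sum (f := C) (fun i _ => bot_le) hj
      (hg j (Finset.mem_filter.mp hj).1)

set_option maxHeartbeats 1000000 in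
/-- For a `ℤ/pℤ`-graded commutative ring `A` with components `𝒜 i`, letting
`I = Σ_{i=1}^{p-1} 𝒜 i · 𝒜 (p-i)` and `J = I + 𝒜 1 + ⋯ + 𝒜 (p-1)`, for every `k ≥ 1` the
degree-zero part of `J^k` equals `Σ_{i=1}^{p-1} 𝒜 i · (J^{k-1} ∩ 𝒜 (p-i))`
(with the convention `J^0 = A`). -/
theorem degree_zero_part_of_pow_aug_ideal
    {A : Type*} [CommRing A] {p : ℕ} (hp : p.Prime)
    (𝒜 : ZMod p → Submodule ℤ A) [GradedRing 𝒜]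
    (I J : Submodule ℤ A)
    (hI : I = ∑ i ∈ Finset.Icc 1 (p - 1), 𝒜 (i : ZMod p) * 𝒜 ((p - i : ℕ) : ZMod p))
    (hJ : J = I + ∑ i ∈ Finset.Icc 1 (p - 1), 𝒜 (i : ZMod p))
    (k : ℕ) (hk : 1 ≤ k) :
    subgroupPow J k ⊓ 𝒜 (0 : ZMod p) =
      ∑ i ∈ Finset.Icc 1 (p - 1),
        𝒜 (i : ZMod p) * (subgroupPow J (k - 1) ⊓ 𝒜 ((p - i : ℕ) : ZMod p)) := by
  classical
  haveI : NeZero p := ⟨hp.pos.ne'⟩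
  have hp2 : 2 ≤ p := hp.two_le
  set s : Finset ℕ := Finset.Icc 1 (p - 1) with hs
  -- basic facts about the index set
  have hmem : ∀ i ∈ s, 1 ≤ i ∧ i ≤ p - 1 := fun i hi => Finset.mem_Icc.mp hi
  have hne : ∀ i ∈ s, ((i : ℕ) : ZMod p) ≠ 0 := by
    intro i hi h
    obtain ⟨h1, h2⟩ := hmem i hi
    rw [ZMod.natCast_eq_zero_iff] at h
    have := Nat.le_of_dvd (by omega) h
    omega
  have hneg : ∀ i ∈ s, ((p - i : ℕ) : ZMod p) = -((i : ℕ) : ZMod p) := by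
    intro i hi
    obtain ⟨h1, h2⟩ := hmem i hi
    have hpi : (p - i) + i = p := by omega
    have := congrArg (Nat.cast : ℕ → ZMod p) hpi
    rw [Nat.cast_add, ZMod.natCast_self] at this
    exact eq_neg_of_add_eq_zero_left this
  have hcast0 : ∀ i ∈ s, ((i : ℕ) : ZMod p) + ((p - i : ℕ) : ZMod p) = 0 := by
    intro i hi; rw [hneg i hi, add_neg_cancel]
  have hsurj : ∀ m : ZMod p, m ≠ 0 → ∃ i ∈ s, ((i : ℕ) : ZMod p) = m := by
    intro m hm
    refine ⟨m.val, ?_, ZMod.natCast_zmod_val m⟩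
    have h1 : m.val ≠ 0 := fun h => hm ((ZMod.val_eq_zero m).mp h)
    have h2 : m.val < p := ZMod.val_lt m
    rw [hs, Finset.mem_Icc]; omega
  -- graded multiplication
  have hmul : ∀ a b : ZMod p, 𝒜 a * 𝒜 b ≤ 𝒜 (a + b) := fun a b =>
    Submodule.mul_le.mpr fun x hx y hy => SetLike.mul_mem_graded hx hy
  have hIsummand : ∀ i ∈ s, 𝒜 (i : ZMod p) * 𝒜 ((p - i : ℕ) : ZMod p) ≤ 𝒜 0 := by
    intro i hi
    have := hmul ((i : ℕ) : ZMod p) ((p - i : ℕ) : ZMod p)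
    rwa [hcast0 i hi] at this
  have hI0 : I ≤ 𝒜 0 := hI ▸ sum_le_submodule' _ _ _ hIsummand
  have hJsup : J = I ⊔ ∑ i ∈ s, 𝒜 ((i : ℕ) : ZMod p) := by
    rw [hJ, Submodule.add_eq_sup]
  have hIJ : I ≤ J := by rw [hJsup]; exact le_sup_left
  have hAleJ : ∀ m : ZMod p, m ≠ 0 → 𝒜 m ≤ J := by
    intro m hm
    obtain ⟨i, hi, rfl⟩ := hsurj m hm
    rw [hJsup]
    exact le_sup_of_le_right
      (Finset.single_le_sum (f := fun j : ℕ => 𝒜 ((j : ℕ) : ZMod p)) (fun j _ => bot_le) hi)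
  have hpow_succ : ∀ n, subgroupPow J (n + 1) = J * subgroupPow J n := fun n => rfl
  have hpow_zero : subgroupPow J 0 = ⊤ := rfl
  -- powers of J absorb multiplication by graded pieces
  have habsorb : ∀ (a : ZMod p) (n : ℕ), 𝒜 a * subgroupPow J n ≤ subgroupPow J n := by
    intro a n
    induction n with
    | zero => exact le_top
    | succ n ih =>
        rw [hpow_succ, mul_left_comm]
        exact mul_le_mul' le_rfl ih
  -- top is the sum of all graded pieces
  have htop : (⊤ : Submodule ℤ A) ≤ ∑ m : ZMod p, 𝒜 m := by
    intro x _
    rw [← DirectSum.sum_support_decompose 𝒜 x]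
    exact Submodule.sum_mem _ fun i _ =>
      Finset.single_le_sum (f := fun m => 𝒜 m) (fun j _ => bot_le) (Finset.mem_univ i)
        (SetLike.coe_mem _)
  -- J is homogeneous
  have hJhom : J ≤ ∑ m : ZMod p, (J ⊓ 𝒜 m) := by
    refine le_trans (le_of_eq hJsup) (sup_le ?_ ?_)
    · exact le_trans (le_inf hIJ hI0)
        (Finset.single_le_sum (f := fun m => J ⊓ 𝒜 m) (fun j _ => bot_le) (Finset.mem_univ 0))
    · refine sum_le_submodule' _ _ _ fun i hi => ?_
      exact le_trans (le_inf (hAleJ _ (hne i hi)) le_rfl)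
        (Finset.single_le_sum (f := fun m => J ⊓ 𝒜 m) (fun j _ => bot_le) (Finset.mem_univ _))
  -- powers of J are homogeneous
  have hhom : ∀ n, subgroupPow J n ≤ ∑ m : ZMod p, (subgroupPow J n ⊓ 𝒜 m) := by
    intro n
    induction n with
    | zero =>
        rw [hpow_zero]
        refine le_trans htop (sum_le_submodule' _ _ _ fun m _ => ?_)
        exact le_trans (le_of_eq (top_inf_eq (𝒜 m)).symm)
          (Finset.single_le_sum (f := fun m => (⊤ : Submodule ℤ A) ⊓ 𝒜 m)
            (fun j _ => bot_le) (Finset.mem_univ m))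
    | succ n ih =>
        rw [hpow_succ]
        refine le_trans (mul_le_mul' hJhom ih) ?_
        rw [Finset.sum_mul_sum]
        refine sum_le_submodule' _ _ _ fun j _ => sum_le_submodule' _ _ _ fun l _ => ?_
        have h1 : (J ⊓ 𝒜 j) * (subgroupPow J n ⊓ 𝒜 l) ≤ subgroupPow J (n + 1) ⊓ 𝒜 (j + l) := by
          refine le_inf ?_ ?_
          · rw [hpow_succ]; exact mul_le_mul' inf_le_left inf_le_left
          · exact le_trans (mul_le_mul' inf_le_right inf_le_right) (hmul j l)
        exact le_trans h1
          (Finset.single_le_sum (f := fun m => subgroupPow J (n + 1) ⊓ 𝒜 m)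
            (fun j _ => bot_le) (Finset.mem_univ _))
  -- degree-zero part of J is I
  have hJ0 : J ⊓ 𝒜 0 ≤ I := by
    have hJsum : J = ∑ i ∈ insert 0 s, (if i = 0 then I else 𝒜 ((i : ℕ) : ZMod p)) := by
      rw [Finset.sum_insert (by simp [hs]), if_pos rfl, hJ]
      congr 1
      exact Finset.sum_congr rfl fun i hi => by
        rw [if_neg (by have := (hmem i hi).1; omega)]
    have := inf_graded_component_le 𝒜 (insert 0 s) (fun i => ((i : ℕ) : ZMod p))
      (fun i => if i = 0 then I else 𝒜 ((i : ℕ) : ZMod p))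
      (fun i hi => by
        rcases Finset.mem_insert.mp hi with rfl | hi
        · simpa using hI0
        · have h0 : i ≠ 0 := by have := (hmem i hi).1; omega
          simpa [h0] using le_rfl) 0
    rw [← hJsum] at this
    refine le_trans this ?_
    have hfilter : (insert 0 s).filter (fun i => ((i : ℕ) : ZMod p) = 0) = {0} := by
      ext i
      simp only [Finset.mem_filter, Finset.mem_insert, Finset.mem_singleton]
      constructor
      · rintro ⟨rfl | hi, h⟩
        · rfl
        · exact absurd h (hne i hi)
      · rintro rfl; exact ⟨Or.inl rfl, by simp⟩
    rw [hfilter, Finset.sum_singleton, if_pos rfl]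
  -- main proof
  obtain ⟨n, rfl⟩ : ∃ n, k = n + 1 := ⟨k - 1, by omega⟩
  have hk1 : n + 1 - 1 = n := rfl
  rw [hk1]
  apply le_antisymm
  · -- hard direction
    have step1 : subgroupPow J (n + 1) ≤
        ∑ q ∈ Finset.univ ×ˢ (Finset.univ : Finset (ZMod p)),
          (J ⊓ 𝒜 q.1) * (subgroupPow J n ⊓ 𝒜 q.2) := by
      rw [hpow_succ]
      refine le_trans (mul_le_mul' hJhom (hhom n)) ?_
      rw [Finset.sum_mul_sum, Finset.sum_product]
    refine le_trans (inf_le_inf_right _ step1) ?_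
    refine le_trans (inf_graded_component_le 𝒜 (Finset.univ ×ˢ Finset.univ)
      (fun q => q.1 + q.2)
      (fun q => (J ⊓ 𝒜 q.1) * (subgroupPow J n ⊓ 𝒜 q.2))
      (fun q _ => le_trans (mul_le_mul' inf_le_right inf_le_right) (hmul q.1 q.2))
      0) ?_
    refine sum_le_submodule' _ _ _ fun q hq => ?_
    have hq0 : q.1 + q.2 = 0 := (Finset.mem_filter.mp hq).2
    by_cases h1 : q.1 = 0
    · -- both components zero: use I
      have h2 : q.2 = 0 := by rw [h1, zero_add] at hq0; exact hq0
      rw [h1, h2]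
      refine le_trans (mul_le_mul' hJ0 le_rfl) ?_
      rw [hI, Finset.sum_mul]
      refine sum_le_submodule' _ _ _ fun i hi => ?_
      rw [mul_assoc]
      have hinner : 𝒜 ((p - i : ℕ) : ZMod p) * (subgroupPow J n ⊓ 𝒜 0) ≤
          subgroupPow J n ⊓ 𝒜 ((p - i : ℕ) : ZMod p) := by
        refine le_inf ?_ ?_
        · exact le_trans (mul_le_mul' le_rfl inf_le_left) (habsorb _ n)
        · have h' := hmul ((p - i : ℕ) : ZMod p) 0
          rw [add_zero] at h'
          exact le_trans (mul_le_mul' le_rfl inf_le_right) h'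
      exact le_trans (mul_le_mul' le_rfl hinner)
        (Finset.single_le_sum
          (f := fun j : ℕ => 𝒜 ((j : ℕ) : ZMod p) *
            (subgroupPow J n ⊓ 𝒜 ((p - j : ℕ) : ZMod p)))
          (fun j _ => bot_le) hi)
    · -- nonzero component
      obtain ⟨i, hi, hiq⟩ := hsurj q.1 h1
      have h2 : q.2 = ((p - i : ℕ) : ZMod p) := by
        rw [hneg i hi, hiq]
        exact eq_neg_of_add_eq_zero_left (by rw [add_comm]; exact hq0)
      rw [← hiq, h2]
      exact le_trans (mul_le_mul' inf_le_right le_rfl)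
        (Finset.single_le_sum
          (f := fun j : ℕ => 𝒜 ((j : ℕ) : ZMod p) *
            (subgroupPow J n ⊓ 𝒜 ((p - j : ℕ) : ZMod p)))
          (fun j _ => bot_le) hi)
  · -- easy direction
    refine sum_le_submodule' _ _ _ fun i hi => ?_
    refine le_inf ?_ ?_
    · rw [hpow_succ]
      exact mul_le_mul' (hAleJ _ (hne i hi)) inf_le_left
    · refine le_trans (mul_le_mul' le_rfl inf_le_right) (hIsummand i hi)
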